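/- (Non-identifiability without the conditions of Theorem 1.) Let Φ be the standard normal cumulative distribution function. Fix p, K ≥ 1, β ∈ ℝ^p, α ∈ ℝ^K, λ⁰ > 0, β₀⁰ ∈ ℝ, σ⁰ > 0, α₀⁰ ∈ ℝ, ρ⁰ ∈ (−1, 1). For any σ* > 0, β₀* ∈ ℝ, ρ* ∈ (−1, 1), define λ* := λ⁰ exp(β₀⁰ − β₀* + (σ⁰² − σ*²)/2) and α₀* := α₀⁰ + σ⁰ρ⁰ − σ*ρ*. Then λ* > 0, and for all x_t ∈ ℝ^p, x_w ∈ ℝ^K, and w ∈ {0, 1}: λ* exp(β₀* + ⟨x_t, β⟩ + σ*²/2) Φ(α₀* + ⟨x_w, α⟩ + σ*ρ*)^w (1 − Φ(α₀* + ⟨x_w, α⟩ + σ*ρ*))^{1−w} = λ⁰ exp(β₀⁰ + ⟨x_t, β⟩ + σ⁰²/2) Φ(α₀⁰ + ⟨x_w, α⟩ + σ⁰ρ⁰)^w (1 − Φ(α₀⁰ + ⟨x_w, α⟩ + σ⁰ρ⁰))^{1−w}. In particular, if the frailty standard deviation σ_u is not fixed, or intercepts β₀ and α₀ are included, distinct parameter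 vectors produce identical integrated likelihood contributions for all covariates. -/
import Mathlib

open Real MeasureTheory

/-- The standard normal cumulative distribution function `Φ`. -/
noncomputable def stdNormalCDF (x : ℝ) : ℝ :=
  ∫ t in Set.Iic x, (Real.sqrt (2 * π))⁻¹ * Real.exp (-t ^ 2 / 2)

/-- Non-identifiability without the conditions of Theorem 1: if the frailty standard
deviation `σ` is not fixed, or intercepts `β₀` and `α₀` are included, then the
distinct parameter vector `(λ*, β₀*, σ*, α₀*, ρ*)` defined by
`λ* = λ⁰ exp(β₀⁰ − β₀* + (σ⁰² − σ*²)/2)` and `α₀* = α₀⁰ + σ⁰ρ⁰ − σ*ρ*` produces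
identical integrated likelihood contributions for all covariates. -/
theorem non_identifiability (p K : ℕ) (hp : 1 ≤ p) (hK : 1 ≤ K)
    (β : Fin p → ℝ) (α : Fin K → ℝ)
    (lam0 : ℝ) (hlam0 : 0 < lam0) (β00 : ℝ) (σ0 : ℝ) (hσ0 : 0 < σ0) (α00 : ℝ)
    (ρ0 : ℝ) (hρ0₁ : -1 < ρ0) (hρ0₂ : ρ0 < 1)
    (σs : ℝ) (hσs : 0 < σs) (β0s : ℝ) (ρs : ℝ) (hρs₁ : -1 < ρs) (hρs₂ : ρs < 1) :
    let lams : ℝ := lam0 * Real.exp (β00 - β0s + (σ0 ^ 2 - σs ^ 2) / 2)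
    let α0s : ℝ := α00 + σ0 * ρ0 - σs * ρs
    0 < lams ∧
      ∀ (xt : Fin p → ℝ) (xw : Fin K → ℝ) (w : ℕ), w = 0 ∨ w = 1 →
        lams * Real.exp (β0s + (∑ i, xt i * β i) + σs ^ 2 / 2) *
            stdNormalCDF (α0s + (∑ i, xw i * α i) + σs * ρs) ^ w *
            (1 - stdNormalCDF (α0s + (∑ i, xw i * α i) + σs * ρs)) ^ (1 - w)
          = lam0 * Real.exp (β00 + (∑ i, xt i * β i) + σ0 ^ 2 / 2) *
              stdNormalCDF (α00 + (∑ i, xw i * α i) + σ0 * ρ0) ^ w *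
              (1 - stdNormalCDF (α00 + (∑ i, xw i * α i) + σ0 * ρ0)) ^ (1 - w) := by
  intro lams α0s
  constructor
  · exact mul_pos hlam0 (Real.exp_pos _)
  · intro xt xw w hw
    have harg : α0s + (∑ i, xw i * α i) + σs * ρs
        = α00 + (∑ i, xw i * α i) + σ0 * ρ0 := by simp [α0s]; ring
    have hexp : lams * Real.exp (β0s + (∑ i, xt i * β i) + σs ^ 2 / 2)
        = lam0 * Real.exp (β00 + (∑ i, xt i * β i) + σ0 ^ 2 / 2) := by
      simp only [lams, mul_assoc, ← Real.exp_add]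
      ring_nf
    rw [harg, hexp]
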